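/- (Dynamics of the transformed internal-model state, equation (19).) Suppose ω: ℝ → ℝ³ is differentiable, η: ℝ → ℝⁿ is twice differentiable, u, d: ℝ → ℝ³ are continuous, and v, θ: ℝ → ℝ^r are differentiable, and that for all t: J dω/dt = −ω(t)^× J ω(t) + u(t) + d(t) − δ η̈(t); dv/dt = M v(t) + N u(t) + N F₀(ω(t)) − M N L₀(ω(t)); and dθ/dt = M θ(t) − N d(t). Then the function v̌(t) := v(t) − θ(t) − N δ η̇(t) − N J ω(t) satisfies, for all t, dv̌/dt = M v̌(t) + M N δ η̇(t) + (M N L₁(ω(t)) − N F₁(ω(t))) μ. -/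

import Mathlib

open Matrix Filter Topology Set

noncomputable section

/-- The skew-symmetric matrix `ϖ^×` associated to `ϖ ∈ ℝ³`. -/
def skew3 (w : Fin 3 → ℝ) : Matrix (Fin 3) (Fin 3) ℝ :=
  !![0, -w 2, w 1; w 2, 0, -w 0; -w 1, w 0, 0]

/-- The matrix `L(x) ∈ ℝ^{3×6}` with `Jx = L(x)(J₁₁,J₂₂,J₃₃,J₂₃,J₁₃,J₁₂)ᵀ` for symmetric `J`. -/
def Lmat (x : Fin 3 → ℝ) : Matrix (Fin 3) (Fin 6) ℝ :=
  !![x 0, 0, 0, 0, x 2, x 1;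
     0, x 1, 0, x 2, 0, x 0;
     0, 0, x 2, x 1, x 0, 0]

/-- `L₁(x) = L(x) L̄₁`. -/
def L1m {nμ : ℕ} (Lb1 : Matrix (Fin 6) (Fin nμ) ℝ) (x : Fin 3 → ℝ) :
    Matrix (Fin 3) (Fin nμ) ℝ := Lmat x * Lb1

/-- `L₀(x) = L(x) L̄₀`. -/
def L0v (Lb0 : Fin 6 → ℝ) (x : Fin 3 → ℝ) : Fin 3 → ℝ := (Lmat x).mulVec Lb0

/-- `F₁(x) = −x^× L₁(x)`. -/
def F1m {nμ : ℕ} (Lb1 : Matrix (Fin 6) (Fin nμ) ℝ) (x : Fin 3 → ℝ) :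
    Matrix (Fin 3) (Fin nμ) ℝ := -(skew3 x) * L1m Lb1 x

/-- `F₀(x) = −x^× L₀(x)`. -/
def F0v (Lb0 : Fin 6 → ℝ) (x : Fin 3 → ℝ) : Fin 3 → ℝ := -((skew3 x).mulVec (L0v Lb0 x))


lemma hasDerivAt_mulVec' {m k : ℕ} (A : Matrix (Fin m) (Fin k) ℝ)
    (f : ℝ → Fin k → ℝ) (f' : Fin k → ℝ) {t : ℝ} (hf : HasDerivAt f f' t) :
    HasDerivAt (fun s => A.mulVec (f s)) (A.mulVec f') t := by
  have := (A.mulVecLin.toContinuousLinearMap.hasFDerivAt (x := f t)).comp_hasDerivAt t hf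
  simp at this
  exact this

lemma Lmat_J (J : Matrix (Fin 3) (Fin 3) ℝ) (hJs : J.IsSymm) (x : Fin 3 → ℝ) :
    (Lmat x).mulVec (![J 0 0, J 1 1, J 2 2, J 1 2, J 0 2, J 0 1]) = J.mulVec x := by
  have h10 : J 1 0 = J 0 1 := (congrFun (congrFun hJs 1) 0).symm
  have h20 : J 2 0 = J 0 2 := (congrFun (congrFun hJs 2) 0).symm
  have h21 : J 2 1 = J 1 2 := (congrFun (congrFun hJs 2) 1).symm
  funext i
  fin_cases i <;>
    simp [Lmat, Matrix.mulVec, dotProduct, Fin.sum_univ_succ, h10, h20, h21] <;> ring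

/-- Dynamics of the transformed internal-model state, equation (19):
`v̌ = v − θ − Nδη̇ − NJω` satisfies `dv̌/dt = Mv̌ + MNδη̇ + (MNL₁(ω) − NF₁(ω))μ`. -/
theorem stmt_4 {n nμ r : ℕ} (hn : 0 < n) (hnμ : 0 < nμ) (hr : 0 < r)
    (J : Matrix (Fin 3) (Fin 3) ℝ) (hJs : J.IsSymm)
    (Lb1 : Matrix (Fin 6) (Fin nμ) ℝ) (Lb0 : Fin 6 → ℝ) (μ : Fin nμ → ℝ)
    (hJdec : (![J 0 0, J 1 1, J 2 2, J 1 2, J 0 2, J 0 1] : Fin 6 → ℝ) = Lb1.mulVec μ + Lb0)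
    (δ : Matrix (Fin 3) (Fin n) ℝ)
    (M : Matrix (Fin r) (Fin r) ℝ) (N : Matrix (Fin r) (Fin 3) ℝ)
    (ω ω' : ℝ → Fin 3 → ℝ) (η ηd ηdd : ℝ → Fin n → ℝ) (u d : ℝ → Fin 3 → ℝ)
    (v θ : ℝ → Fin r → ℝ)
    (hω : ∀ t, HasDerivAt ω (ω' t) t)
    (hη : ∀ t, HasDerivAt η (ηd t) t)
    (hηd : ∀ t, HasDerivAt ηd (ηdd t) t)
    (huc : Continuous u) (hdc : Continuous d)
    (hdyn : ∀ t, J.mulVec (ω' t) =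
      -((skew3 (ω t)).mulVec (J.mulVec (ω t))) + u t + d t - δ.mulVec (ηdd t))
    (hv : ∀ t, HasDerivAt v
      (M.mulVec (v t) + N.mulVec (u t) + N.mulVec (F0v Lb0 (ω t))
        - (M * N).mulVec (L0v Lb0 (ω t))) t)
    (hθ : ∀ t, HasDerivAt θ (M.mulVec (θ t) - N.mulVec (d t)) t) :
    ∀ t, HasDerivAt
      (fun s => v s - θ s - (N * δ).mulVec (ηd s) - N.mulVec (J.mulVec (ω s)))
      (M.mulVec (v t - θ t - (N * δ).mulVec (ηd t) - N.mulVec (J.mulVec (ω t)))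
        + (M * N * δ).mulVec (ηd t)
        + (M * N * L1m Lb1 (ω t) - N * F1m Lb1 (ω t)).mulVec μ) t := by
  intro t
  have key : J.mulVec (ω t) = (L1m Lb1 (ω t)).mulVec μ + L0v Lb0 (ω t) := by
    rw [← Lmat_J J hJs (ω t), hJdec, Matrix.mulVec_add, L1m, L0v, Matrix.mulVec_mulVec]
  have hD := (((hv t).sub (hθ t)).sub (hasDerivAt_mulVec' (N * δ) ηd (ηdd t) (hηd t))).sub
    (hasDerivAt_mulVec' N (fun s => J.mulVec (ω s)) (J.mulVec (ω' t))
      (hasDerivAt_mulVec' J ω (ω' t) (hω t)))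
  refine hD.congr_deriv ?_
  rw [hdyn t, key]
  simp only [F0v, F1m, Matrix.mulVec_add, Matrix.add_mulVec, Matrix.sub_mulVec,
    Matrix.mulVec_sub, Matrix.neg_mulVec, Matrix.mulVec_neg, ← Matrix.mulVec_mulVec]
  abel

end
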